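/- Let $M \in \mathbb{R}^{m\times m}$ satisfy $\zeta^\top M \zeta \geq \lambda \|\zeta\|^2$ for all $\zeta \in \mathbb{R}^m$ with $0 < \lambda \leq 1$, let $b \in \mathbb{R}^m$ with $\|b\| \leq 1$, and let $c_\gamma \geq \lambda + \sqrt{\lambda^{-2}-1}$. Define the block matrix $A = \begin{pmatrix} c_\gamma & 0 \\ b & M \end{pmatrix} \in \mathbb{R}^{(1+m)\times(1+m)}$. Then for all $\xi = (\eta, \zeta) \in \mathbb{R}^{1+m}$, $\xi^\top A \xi \geq (\lambda/2)\|\xi\|^2$; in particular $A$ is invertible. -/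

import Mathlib

open Matrix

theorem stmt6 (m : ℕ) (M : Matrix (Fin m) (Fin m) ℝ) (lam : ℝ)
    (hlam0 : 0 < lam) (hlam1 : lam ≤ 1)
    (hM : ∀ ζ : Fin m → ℝ, lam * (ζ ⬝ᵥ ζ) ≤ ζ ⬝ᵥ M.mulVec ζ)
    (b : Fin m → ℝ) (hb : b ⬝ᵥ b ≤ 1)
    (cγ : ℝ) (hcγ : lam + Real.sqrt (lam⁻¹ ^ 2 - 1) ≤ cγ)
    (A : Matrix (Fin 1 ⊕ Fin m) (Fin 1 ⊕ Fin m) ℝ)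
    (hA : A = Matrix.fromBlocks (Matrix.of fun _ _ => cγ) 0 (Matrix.of fun i _ => b i) M) :
    (∀ ξ : Fin 1 ⊕ Fin m → ℝ, lam / 2 * (ξ ⬝ᵥ ξ) ≤ ξ ⬝ᵥ A.mulVec ξ) ∧ IsUnit A := by
  have hlamne : lam ≠ 0 := ne_of_gt hlam0
  -- key scalar inequality: 1 + lam^2 ≤ 2 * lam * cγ
  have hsq : (1 - lam ^ 2) / (2 * lam) ≤ Real.sqrt (lam⁻¹ ^ 2 - 1) := by
    apply Real.le_sqrt_of_sq_le
    rw [div_pow, show lam⁻¹ ^ 2 - 1 = (1 - lam ^ 2) / lam ^ 2 by field_simp,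
      div_le_div_iff₀ (by positivity) (by positivity)]
    nlinarith [mul_nonneg (mul_nonneg (mul_pos hlam0 hlam0).le
      (by nlinarith : (0:ℝ) ≤ 1 - lam ^ 2)) (by nlinarith : (0:ℝ) ≤ 3 + lam ^ 2)]
  have hkey : 1 + lam ^ 2 ≤ 2 * lam * cγ := by
    have h1 : lam + (1 - lam ^ 2) / (2 * lam) ≤ cγ := by linarith
    rw [← sub_nonneg] at h1 ⊢
    have : 2 * lam * cγ - (1 + lam ^ 2) = 2 * lam * (cγ - (lam + (1 - lam ^ 2) / (2 * lam))) := by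
      field_simp; ring
    rw [this]
    positivity
  have hquad : ∀ ξ : Fin 1 ⊕ Fin m → ℝ, lam / 2 * (ξ ⬝ᵥ ξ) ≤ ξ ⬝ᵥ A.mulVec ξ := by
    intro ξ
    obtain ⟨x, ζ, hξ⟩ : ∃ (x : Fin 1 → ℝ) (ζ : Fin m → ℝ), ξ = Sum.elim x ζ :=
      ⟨ξ ∘ Sum.inl, ξ ∘ Sum.inr, by funext i; cases i <;> rfl⟩
    subst hξ
    rw [hA, Matrix.fromBlocks_mulVec, sumElim_dotProduct_sumElim,
      Sum.elim_comp_inl, Sum.elim_comp_inr, sumElim_dotProduct_sumElim]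
    set η : ℝ := x 0 with hη
    have hx0 : x ⬝ᵥ x = η * η := by
      simp [dotProduct, Fin.sum_univ_one, ← hη]
    have htop : x ⬝ᵥ ((Matrix.of fun _ _ => cγ) *ᵥ x + 0 *ᵥ ζ) = cγ * η * η := by
      simp [Matrix.mulVec, dotProduct, Fin.sum_univ_one]
      ring
    have hbot : ζ ⬝ᵥ ((Matrix.of fun i _ => b i) *ᵥ x + M *ᵥ ζ)
        = (ζ ⬝ᵥ b) * η + ζ ⬝ᵥ M.mulVec ζ := by
      rw [dotProduct_add]
      congr 1
      simp [Matrix.mulVec, dotProduct, Fin.sum_univ_one, Finset.sum_mul, ← hη]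
      exact Finset.sum_congr rfl fun i _ => by ring
    rw [htop, hbot, hx0]
    have hCS : (ζ ⬝ᵥ b) ^ 2 ≤ ζ ⬝ᵥ ζ := by
      have h1 : (∑ i, ζ i * b i) ^ 2 ≤ (∑ i, ζ i ^ 2) * ∑ i, b i ^ 2 :=
        Finset.sum_mul_sq_le_sq_mul_sq _ _ _
      have h2 : ζ ⬝ᵥ ζ = ∑ i, ζ i ^ 2 := by simp [dotProduct, sq]
      have h3 : b ⬝ᵥ b = ∑ i, b i ^ 2 := by simp [dotProduct, sq]
      have h4 : (0:ℝ) ≤ ∑ i, ζ i ^ 2 := Finset.sum_nonneg fun i _ => sq_nonneg _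
      calc (ζ ⬝ᵥ b) ^ 2 = (∑ i, ζ i * b i) ^ 2 := by simp [dotProduct]
        _ ≤ (∑ i, ζ i ^ 2) * ∑ i, b i ^ 2 := h1
        _ ≤ (∑ i, ζ i ^ 2) * 1 := by
            apply mul_le_mul_of_nonneg_left _ h4
            rw [← h3]; exact hb
        _ = ζ ⬝ᵥ ζ := by rw [mul_one, h2]
    have hMζ := hM ζ
    have hzz : (0:ℝ) ≤ ζ ⬝ᵥ ζ := Finset.sum_nonneg fun i _ => mul_self_nonneg _
    nlinarith [sq_nonneg (η + lam * (ζ ⬝ᵥ b)), sq_nonneg η,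
      mul_nonneg (mul_nonneg hlam0.le hlam0.le) (sub_nonneg.2 hCS),
      mul_nonneg (sub_nonneg.2 hkey) (sq_nonneg η)]
  refine ⟨hquad, ?_⟩
  rw [← Matrix.mulVec_injective_iff_isUnit]
  intro u v huv
  have h0 : ∀ w : Fin 1 ⊕ Fin m → ℝ, A.mulVec w = 0 → w = 0 := by
    intro w hw
    have := hquad w
    rw [hw, dotProduct_zero] at this
    have hww : (0:ℝ) ≤ w ⬝ᵥ w := Finset.sum_nonneg fun i _ => mul_self_nonneg _
    have : w ⬝ᵥ w = 0 := by nlinarith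
    exact dotProduct_self_eq_zero.mp this
  have := h0 (u - v) (by rw [Matrix.mulVec_sub, huv, sub_self])
  exact sub_eq_zero.mp this
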